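/- Let G be a finite connected simple graph containing at least one cycle, and let ω0 be an acyclic orientation of G. For a simple cycle κ of G, with its two traversal directions, let c+(κ,ω0) and c−(κ,ω0) be the numbers of edges of κ that ω0 orients along each of the two traversal directions, and let |κ| be the number of vertices of κ. Then, with p an eventual period of the synchronous edge-reversal sequence from ω0 and m the common number of times each vertex is a sink per period, m/p equals the minimum, over all simple cycles κ of G, of min(c+(κ,ω0), c−(κ,ω0)) / |κ|. -/

import Mathlib

variable {V : Type*}

/-- `o` is an orientation of the simple graph `G`: it assigns a direction to each
edge of `G` (for adjacent `u, v`, exactly one of `o u v`, `o v u` holds) and relates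
no other pairs. -/
def IsOrientation (G : SimpleGraph V) (o : V → V → Prop) : Prop :=
  ∀ u v, (o u v → G.Adj u v) ∧ (G.Adj u v → (o u v ↔ ¬ o v u))

/-- A sink of an orientation: a vertex with no outgoing edge (every incident edge is
directed toward it). -/
def IsSink (o : V → V → Prop) (v : V) : Prop := ∀ u, ¬ o v u

/-- A directed graph (or orientation) is acyclic when it has no directed cycle. -/
def DirAcyclic (o : V → V → Prop) : Prop := ∀ v, ¬ Relation.TransGen o v v

/-- The synchronous edge-reversal step: every edge incident to a sink is reversed
(every sink becomes a source); all other edges keep their direction. -/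
def revStep (o : V → V → Prop) : V → V → Prop :=
  fun u v => (o u v ∧ ¬ IsSink o v) ∨ (o v u ∧ IsSink o u)

/-- The sequence of orientations produced by synchronous edge reversal:
`orientSeq ω0 s` is the result of `s` edge-reversal steps applied to `ω0`. -/
def orientSeq (ω0 : V → V → Prop) (s : ℕ) : V → V → Prop := revStep^[s] ω0

attribute [local instance] Classical.propDecidable

/-- The number of edges of the simple cycle `κ` that the orientation `o` orients along
the traversal direction of `κ`. -/
noncomputable def cPlus {G : SimpleGraph V} {w : V} (o : V → V → Prop)
    (κ : G.Walk w w) : ℕ :=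
  κ.darts.countP (fun d => decide (o d.toProd.1 d.toProd.2))

/-- The number of edges of the simple cycle `κ` that the orientation `o` orients
against the traversal direction of `κ` (i.e. along the opposite traversal). -/
noncomputable def cMinus {G : SimpleGraph V} {w : V} (o : V → V → Prop)
    (κ : G.Walk w w) : ℕ :=
  κ.darts.countP (fun d => decide (o d.toProd.2 d.toProd.1))

lemma orientSeq_succ (ω0 : V → V → Prop) (s : ℕ) :
    orientSeq ω0 (s+1) = revStep (orientSeq ω0 s) := by
  simp [orientSeq, Function.iterate_succ_apply']

lemma orient_excl {G : SimpleGraph V} {o : V → V → Prop} (h : IsOrientation G o)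
    {u v : V} (hadj : G.Adj u v) : o u v ↔ ¬ o v u := (h u v).2 hadj

lemma sink_in {G : SimpleGraph V} {o : V → V → Prop} (h : IsOrientation G o)
    {u v : V} (hadj : G.Adj u v) (hs : IsSink o v) : o u v :=
  ((h u v).2 hadj).2 (hs u)

lemma revStep_iff1 {o : V → V → Prop} {u v : V} (h : o u v) (hK : ¬ o v u) :
    revStep o u v ↔ ¬ IsSink o v := by
  unfold revStep
  constructor
  · rintro (⟨_, h2⟩ | ⟨h1, _⟩)
    · exact h2
    · exact absurd h1 hK
  · exact fun hn => Or.inl ⟨h, hn⟩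

lemma revStep_iff2 {o : V → V → Prop} {u v : V} (h : o u v) (hK : ¬ o v u) :
    revStep o v u ↔ IsSink o v := by
  unfold revStep
  constructor
  · rintro (⟨h1, _⟩ | ⟨_, h2⟩)
    · exact absurd h1 hK
    · exact h2
  · exact fun hs => Or.inr ⟨h, hs⟩

lemma isOrientation_revStep {G : SimpleGraph V} {o : V → V → Prop}
    (h : IsOrientation G o) : IsOrientation G (revStep o) := by
  intro u v
  constructor
  · rintro (⟨h1, _⟩ | ⟨h1, _⟩)
    · exact (h u v).1 h1
    · exact ((h v u).1 h1).symm
  · intro hadj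
    by_cases huv : o u v
    · have hvu : ¬ o v u := ((h u v).2 hadj).mp huv
      rw [revStep_iff1 huv hvu, revStep_iff2 huv hvu]
    · have hvu : o v u := ((h v u).2 hadj.symm).mpr huv
      rw [revStep_iff1 hvu huv, revStep_iff2 hvu huv]
      tauto

lemma isOrientation_orientSeq {G : SimpleGraph V} {ω0 : V → V → Prop}
    (h : IsOrientation G ω0) (s : ℕ) : IsOrientation G (orientSeq ω0 s) := by
  induction s with
  | zero => exact h
  | succ n ih => rw [orientSeq_succ]; exact isOrientation_revStep ih

lemma revStep_no_in_sink {o : V → V → Prop} {a b : V} (h : revStep o a b) :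
    ¬ IsSink o b := by
  rcases h with ⟨_, h2⟩ | ⟨h1, _⟩
  · exact h2
  · exact fun hs => hs a h1

lemma transGen_revStep_end {o : V → V → Prop} {a b : V}
    (h : Relation.TransGen (revStep o) a b) : ¬ IsSink o b := by
  induction h with
  | single h => exact revStep_no_in_sink h
  | tail _ h _ => exact revStep_no_in_sink h

lemma dirAcyclic_revStep {o : V → V → Prop} (ha : DirAcyclic o) :
    DirAcyclic (revStep o) := by
  intro v hv
  have hns : ¬ IsSink o v := transGen_revStep_end hv
  have key : ∀ a b, Relation.TransGen (revStep o) a b → ¬ IsSink o a →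
      Relation.TransGen o a b := by
    intro a b h
    induction h with
    | single h =>
      intro hna
      rcases h with ⟨h1, _⟩ | ⟨_, h2⟩
      · exact Relation.TransGen.single h1
      · exact absurd h2 hna
    | @tail b c hab hbc ih =>
      intro hna
      have hnb : ¬ IsSink o b := transGen_revStep_end hab
      rcases hbc with ⟨h1, _⟩ | ⟨_, h2⟩
      · exact (ih hna).tail h1
      · exact absurd h2 hnb
  exact ha v (key v v hv hns)

lemma dirAcyclic_orientSeq {ω0 : V → V → Prop} (h : DirAcyclic ω0) (s : ℕ) :
    DirAcyclic (orientSeq ω0 s) := by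
  induction s with
  | zero => exact h
  | succ n ih => rw [orientSeq_succ]; exact dirAcyclic_revStep ih

lemma exists_sink [Finite V] [Nonempty V] {o : V → V → Prop} (ha : DirAcyclic o) :
    ∃ v, IsSink o v := by
  have hwf : WellFounded (fun a b : V => Relation.TransGen o b a) := by
    have : IsTrans V (fun a b : V => Relation.TransGen o b a) :=
      ⟨fun a b c hab hbc => hbc.trans hab⟩
    have : IsIrrefl V (fun a b : V => Relation.TransGen o b a) :=
      ⟨fun a h => ha a h⟩
    exact Finite.wellFounded_of_trans_of_irrefl _
  obtain ⟨v, _, hmin⟩ := hwf.has_min Set.univ ⟨Classical.arbitrary V, trivial⟩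
  exact ⟨v, fun u hu => hmin u trivial (Relation.TransGen.single hu)⟩

/-- number of times `v` is a sink at times in `[a, b)` -/
noncomputable def scnt (ω0 : V → V → Prop) (v : V) (a b : ℕ) : ℕ :=
  ((Finset.Ico a b).filter (fun s => IsSink (orientSeq ω0 s) v)).card

lemma scnt_add {ω0 : V → V → Prop} {v : V} {a b c : ℕ} (hab : a ≤ b) (hbc : b ≤ c) :
    scnt ω0 v a b + scnt ω0 v b c = scnt ω0 v a c := by
  classical
  unfold scnt
  rw [← Finset.card_union_of_disjoint, ← Finset.filter_union,
    Finset.Ico_union_Ico_eq_Ico hab hbc]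
  exact Finset.disjoint_filter_filter (Finset.Ico_disjoint_Ico_consecutive a b c)

lemma scnt_single {ω0 : V → V → Prop} {v : V} (a : ℕ) :
    scnt ω0 v a (a+1) = if IsSink (orientSeq ω0 a) v then 1 else 0 := by
  classical
  unfold scnt
  rw [Nat.Ico_succ_singleton, Finset.filter_singleton]
  split <;> simp

lemma scnt_succ_right {ω0 : V → V → Prop} {v : V} (a b : ℕ) (h : a ≤ b) :
    scnt ω0 v a (b+1) = scnt ω0 v a b + if IsSink (orientSeq ω0 b) v then 1 else 0 := by
  rw [← scnt_add h (Nat.le_succ b), scnt_single]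

section Periodic

variable {ω0 : V → V → Prop} {s0 p m : ℕ}
variable (hper : ∀ s, s0 ≤ s → orientSeq ω0 (s + p) = orientSeq ω0 s)

include hper

lemma sink_periodic {v : V} {s : ℕ} (hs : s0 ≤ s) :
    IsSink (orientSeq ω0 (s + p)) v ↔ IsSink (orientSeq ω0 s) v := by
  rw [hper s hs]

variable (hm : ∀ v : V, scnt ω0 v s0 (s0 + p) = m)

include hm

lemma scnt_window {v : V} {a : ℕ} (ha : s0 ≤ a) : scnt ω0 v a (a + p) = m := by
  induction a, ha using Nat.le_induction with
  | base => exact hm v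
  | succ a ha ih =>
    have h1 : scnt ω0 v a (a + p) + scnt ω0 v (a+p) (a+p+1) = scnt ω0 v a (a+p+1) :=
      scnt_add (Nat.le_add_right a p) (Nat.le_succ _)
    have h2 : scnt ω0 v a (a+1) + scnt ω0 v (a+1) (a+p+1) = scnt ω0 v a (a+p+1) := by
      have := scnt_add (ω0 := ω0) (v := v) (Nat.le_succ a)
        (by omega : a + 1 ≤ a + p + 1)
      exact this
    have h3 : scnt ω0 v (a+p) (a+p+1) = scnt ω0 v a (a+1) := by
      rw [scnt_single, scnt_single, if_congr (sink_periodic hper ha) rfl rfl]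
    have : a + 1 + p = a + p + 1 := by omega
    rw [this]
    omega

lemma scnt_window_mul {v : V} {a : ℕ} (ha : s0 ≤ a) (k : ℕ) :
    scnt ω0 v a (a + k * p) = k * m := by
  induction k with
  | zero => simp [scnt]
  | succ k ih =>
    have h1 : scnt ω0 v a (a + k * p) + scnt ω0 v (a + k * p) (a + k * p + p)
        = scnt ω0 v a (a + k * p + p) := scnt_add (Nat.le_add_right _ _) (Nat.le_add_right _ _)
    have h2 : scnt ω0 v (a + k * p) (a + k * p + p) = m :=
      scnt_window hper hm (by omega)
    have h3 : a + (k+1) * p = a + k * p + p := by ring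
    rw [h3, ← h1, ih, h2]; ring

end Periodic

lemma orientSeq_zero (ω0 : V → V → Prop) : orientSeq ω0 0 = ω0 := rfl

lemma sink_not_sink_succ {G : SimpleGraph V} {ω0 : V → V → Prop}
    (hor : IsOrientation G ω0) {v u : V} (hadj : G.Adj v u) {s : ℕ}
    (hs : IsSink (orientSeq ω0 s) v) : ¬ IsSink (orientSeq ω0 (s+1)) v := by
  have horS := isOrientation_orientSeq hor s
  have h1 : orientSeq ω0 s u v := sink_in horS hadj.symm hs
  have h2 : ¬ orientSeq ω0 s v u := hs u
  have : orientSeq ω0 (s+1) v u := by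
    rw [orientSeq_succ]
    exact (revStep_iff2 h1 h2).mpr hs
  exact fun hns => hns u this

lemma alternation {G : SimpleGraph V} {ω0 : V → V → Prop}
    (hor : IsOrientation G ω0) {u v : V} (huv : ω0 u v) (s : ℕ) :
    (orientSeq ω0 s u v → scnt ω0 v 0 s = scnt ω0 u 0 s) ∧
    (orientSeq ω0 s v u → scnt ω0 v 0 s = scnt ω0 u 0 s + 1) := by
  have hadj : G.Adj u v := (hor u v).1 huv
  induction s with
  | zero =>
    constructor
    · intro _; rfl
    · intro hvu
      exact absurd huv ((orient_excl hor hadj.symm).mp hvu)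
  | succ s ih =>
    have horS := isOrientation_orientSeq hor s
    have hsv : scnt ω0 v 0 (s+1)
        = scnt ω0 v 0 s + if IsSink (orientSeq ω0 s) v then 1 else 0 :=
      scnt_succ_right 0 s (Nat.zero_le s)
    have hsu : scnt ω0 u 0 (s+1)
        = scnt ω0 u 0 s + if IsSink (orientSeq ω0 s) u then 1 else 0 :=
      scnt_succ_right 0 s (Nat.zero_le s)
    rw [orientSeq_succ]
    by_cases hc : orientSeq ω0 s u v
    · have hnc : ¬ orientSeq ω0 s v u := (orient_excl horS hadj).mp hc
      have hnsu : ¬ IsSink (orientSeq ω0 s) u := fun h => h v hc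
      have hIH := ih.1 hc
      by_cases hsink : IsSink (orientSeq ω0 s) v
      · constructor
        · intro h'
          exact absurd hsink (((revStep_iff1 hc hnc).mp h'))
        · intro _
          rw [hsv, hsu, if_pos hsink, if_neg hnsu, hIH]
      · constructor
        · intro _
          rw [hsv, hsu, if_neg hsink, if_neg hnsu, hIH]
        · intro h'
          exact absurd ((revStep_iff2 hc hnc).mp h') hsink
    · have hvu : orientSeq ω0 s v u := (orient_excl horS hadj.symm).mpr hc
      have hnsv : ¬ IsSink (orientSeq ω0 s) v := fun h => h u hvu
      have hIH := ih.2 hvu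
      by_cases hsink : IsSink (orientSeq ω0 s) u
      · constructor
        · intro _
          rw [hsv, hsu, if_neg hnsv, if_pos hsink, hIH]
        · intro h'
          exact absurd ((revStep_iff1 hvu hc).mp h') (not_not_intro hsink)
      · constructor
        · intro h'
          exact absurd ((revStep_iff2 hvu hc).mp h') hsink
        · intro _
          rw [hsv, hsu, if_neg hnsv, if_neg hsink, hIH]

lemma closed_walk_snd_perm_fst {G : SimpleGraph V} {w : V} (κ : G.Walk w w) :
    (κ.darts.map (·.snd)).Perm (κ.darts.map (·.fst)) := by
  rw [SimpleGraph.Walk.map_snd_darts, SimpleGraph.Walk.map_fst_darts]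
  cases κ with
  | nil => simp
  | cons h q =>
    simp only [SimpleGraph.Walk.support_cons]
    have hne : (SimpleGraph.Walk.support q) ≠ [] := SimpleGraph.Walk.support_ne_nil q
    have hlast : (SimpleGraph.Walk.support q).getLast hne = w :=
      SimpleGraph.Walk.getLast_support q
    rw [List.dropLast_cons_of_ne_nil hne, List.tail_cons]
    conv_lhs => rw [← List.dropLast_append_getLast hne, hlast]
    exact List.perm_append_singleton w _

lemma countP_sink_snd_eq_fst {G : SimpleGraph V} {w : V} (κ : G.Walk w w)
    (o : V → V → Prop) :
    κ.darts.countP (fun d => decide (IsSink o d.toProd.2))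
      = κ.darts.countP (fun d => decide (IsSink o d.toProd.1)) := by
  have h1 : κ.darts.countP (fun d => decide (IsSink o d.toProd.2))
      = (κ.darts.map (·.snd)).countP (fun x => decide (IsSink o x)) := by
    rw [List.countP_map]; rfl
  have h2 : κ.darts.countP (fun d => decide (IsSink o d.toProd.1))
      = (κ.darts.map (·.fst)).countP (fun x => decide (IsSink o x)) := by
    rw [List.countP_map]; rfl
  rw [h1, h2, (closed_walk_snd_perm_fst κ).countP_eq]

lemma countP_revStep_aux {G : SimpleGraph V} {o : V → V → Prop}
    (hor : IsOrientation G o) (l : List G.Dart) :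
    l.countP (fun d => decide (revStep o d.toProd.1 d.toProd.2))
        + l.countP (fun d => decide (IsSink o d.toProd.2))
      = l.countP (fun d => decide (o d.toProd.1 d.toProd.2))
        + l.countP (fun d => decide (IsSink o d.toProd.1)) := by
  induction l with
  | nil => rfl
  | cons d l ih =>
    simp only [List.countP_cons]
    have hadj : G.Adj d.toProd.1 d.toProd.2 := d.adj
    by_cases h : o d.toProd.1 d.toProd.2
    · have hK : ¬ o d.toProd.2 d.toProd.1 := (orient_excl hor hadj).mp h
      have hns1 : ¬ IsSink o d.toProd.1 := fun hs => hs _ h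
      have hrev : revStep o d.toProd.1 d.toProd.2 ↔ ¬ IsSink o d.toProd.2 :=
        revStep_iff1 h hK
      by_cases hs2 : IsSink o d.toProd.2 <;>
        simp only [hrev, h, hs2, hns1, decide_eq_true_eq] <;> simp <;> omega
    · have hvu : o d.toProd.2 d.toProd.1 := (orient_excl hor hadj.symm).mpr h
      have hns2 : ¬ IsSink o d.toProd.2 := fun hs => hs _ hvu
      have hrev : revStep o d.toProd.1 d.toProd.2 ↔ IsSink o d.toProd.1 :=
        revStep_iff2 hvu h
      by_cases hs1 : IsSink o d.toProd.1 <;>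
        simp only [hrev, h, hs1, hns2, decide_eq_true_eq] <;> simp <;> omega

lemma countP_revStep_aux2 {G : SimpleGraph V} {o : V → V → Prop}
    (hor : IsOrientation G o) (l : List G.Dart) :
    l.countP (fun d => decide (revStep o d.toProd.2 d.toProd.1))
        + l.countP (fun d => decide (IsSink o d.toProd.1))
      = l.countP (fun d => decide (o d.toProd.2 d.toProd.1))
        + l.countP (fun d => decide (IsSink o d.toProd.2)) := by
  induction l with
  | nil => rfl
  | cons d l ih =>
    simp only [List.countP_cons]
    have hadj : G.Adj d.toProd.2 d.toProd.1 := d.adj.symm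
    by_cases h : o d.toProd.2 d.toProd.1
    · have hK : ¬ o d.toProd.1 d.toProd.2 := (orient_excl hor hadj).mp h
      have hns2 : ¬ IsSink o d.toProd.2 := fun hs => hs _ h
      have hrev : revStep o d.toProd.2 d.toProd.1 ↔ ¬ IsSink o d.toProd.1 :=
        revStep_iff1 h hK
      by_cases hs1 : IsSink o d.toProd.1 <;>
        simp only [hrev, h, hs1, hns2, decide_eq_true_eq] <;> simp <;> omega
    · have hvu : o d.toProd.1 d.toProd.2 := (orient_excl hor hadj.symm).mpr h
      have hns1 : ¬ IsSink o d.toProd.1 := fun hs => hs _ hvu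
      have hrev : revStep o d.toProd.2 d.toProd.1 ↔ IsSink o d.toProd.2 :=
        revStep_iff2 hvu h
      by_cases hs2 : IsSink o d.toProd.2 <;>
        simp only [hrev, h, hs2, hns1, decide_eq_true_eq] <;> simp <;> omega

lemma cPlus_revStep {G : SimpleGraph V} {o : V → V → Prop} {w : V}
    (hor : IsOrientation G o) (κ : G.Walk w w) : cPlus (revStep o) κ = cPlus o κ := by
  have h := countP_revStep_aux hor κ.darts
  rw [countP_sink_snd_eq_fst κ o] at h
  unfold cPlus
  omega

lemma cMinus_revStep {G : SimpleGraph V} {o : V → V → Prop} {w : V}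
    (hor : IsOrientation G o) (κ : G.Walk w w) : cMinus (revStep o) κ = cMinus o κ := by
  have h := countP_revStep_aux2 hor κ.darts
  rw [countP_sink_snd_eq_fst κ o] at h
  unfold cMinus
  omega

lemma cPlus_orientSeq {G : SimpleGraph V} {ω0 : V → V → Prop} {w : V}
    (hor : IsOrientation G ω0) (κ : G.Walk w w) (s : ℕ) :
    cPlus (orientSeq ω0 s) κ = cPlus ω0 κ := by
  induction s with
  | zero => rfl
  | succ n ih =>
    rw [orientSeq_succ, cPlus_revStep (isOrientation_orientSeq hor n) κ, ih]

lemma cMinus_orientSeq {G : SimpleGraph V} {ω0 : V → V → Prop} {w : V}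
    (hor : IsOrientation G ω0) (κ : G.Walk w w) (s : ℕ) :
    cMinus (orientSeq ω0 s) κ = cMinus ω0 κ := by
  induction s with
  | zero => rfl
  | succ n ih =>
    rw [orientSeq_succ, cMinus_revStep (isOrientation_orientSeq hor n) κ, ih]

lemma sinkHeads_le_cPlus {G : SimpleGraph V} {o : V → V → Prop} {w : V}
    (hor : IsOrientation G o) (κ : G.Walk w w) :
    κ.darts.countP (fun d => decide (IsSink o d.toProd.2)) ≤ cPlus o κ := by
  apply List.countP_mono_left
  intro d _ hd
  simp only [decide_eq_true_eq] at hd ⊢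
  exact sink_in hor d.adj hd

lemma sinkTails_le_cMinus {G : SimpleGraph V} {o : V → V → Prop} {w : V}
    (hor : IsOrientation G o) (κ : G.Walk w w) :
    κ.darts.countP (fun d => decide (IsSink o d.toProd.1)) ≤ cMinus o κ := by
  apply List.countP_mono_left
  intro d _ hd
  simp only [decide_eq_true_eq] at hd ⊢
  exact sink_in hor d.adj.symm hd

lemma sum_countP {α : Type*} (F : Finset ℕ) (l : List α) (p : ℕ → α → Prop) :
    ∑ s ∈ F, l.countP (fun a => decide (p s a))
      = (l.map (fun a => (F.filter (fun s => p s a)).card)).sum := by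
  classical
  induction l with
  | nil => simp
  | cons d l ih =>
    simp only [List.countP_cons, List.map_cons, List.sum_cons]
    rw [Finset.sum_add_distrib, ih, Finset.card_filter]
    have : ∀ s ∈ F, (if (fun a => decide (p s a)) d = true then 1 else 0)
        = if p s d then 1 else 0 := by intro s _; simp
    rw [Finset.sum_congr rfl this]
    omega

lemma walk_bound {G : SimpleGraph V} {ω0 : V → V → Prop}
    (hor : IsOrientation G ω0) {s0 p m : ℕ}
    (hm : ∀ v : V, scnt ω0 v s0 (s0 + p) = m) {w : V} (κ : G.Walk w w) :
    κ.length * m ≤ p * cPlus ω0 κ ∧ κ.length * m ≤ p * cMinus ω0 κ := by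
  classical
  set F := Finset.Ico s0 (s0 + p) with hF
  have hcard : F.card = p := by simp [hF]
  have hsum2 : ∑ s ∈ F, κ.darts.countP
      (fun d => decide (IsSink (orientSeq ω0 s) d.toProd.2)) = κ.length * m := by
    rw [sum_countP F κ.darts (fun s d => IsSink (orientSeq ω0 s) d.toProd.2)]
    have : ∀ d : G.Dart,
        (F.filter (fun s => IsSink (orientSeq ω0 s) d.toProd.2)).card = m :=
      fun d => hm d.toProd.2
    rw [List.map_congr_left (fun d _ => this d), List.map_const', List.sum_replicate,
      SimpleGraph.Walk.length_darts, smul_eq_mul, mul_comm]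
  have hsum1 : ∑ s ∈ F, κ.darts.countP
      (fun d => decide (IsSink (orientSeq ω0 s) d.toProd.1)) = κ.length * m := by
    rw [sum_countP F κ.darts (fun s d => IsSink (orientSeq ω0 s) d.toProd.1)]
    have : ∀ d : G.Dart,
        (F.filter (fun s => IsSink (orientSeq ω0 s) d.toProd.1)).card = m :=
      fun d => hm d.toProd.1
    rw [List.map_congr_left (fun d _ => this d), List.map_const', List.sum_replicate,
      SimpleGraph.Walk.length_darts, smul_eq_mul, mul_comm]
  constructor
  · calc κ.length * m = ∑ s ∈ F, κ.darts.countP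
          (fun d => decide (IsSink (orientSeq ω0 s) d.toProd.2)) := hsum2.symm
      _ ≤ ∑ s ∈ F, cPlus (orientSeq ω0 s) κ :=
          Finset.sum_le_sum (fun s _ => sinkHeads_le_cPlus (isOrientation_orientSeq hor s) κ)
      _ = ∑ _s ∈ F, cPlus ω0 κ := Finset.sum_congr rfl (fun s _ => cPlus_orientSeq hor κ s)
      _ = p * cPlus ω0 κ := by rw [Finset.sum_const, hcard, smul_eq_mul]
  · calc κ.length * m = ∑ s ∈ F, κ.darts.countP
          (fun d => decide (IsSink (orientSeq ω0 s) d.toProd.1)) := hsum1.symm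
      _ ≤ ∑ s ∈ F, cMinus (orientSeq ω0 s) κ :=
          Finset.sum_le_sum (fun s _ => sinkTails_le_cMinus (isOrientation_orientSeq hor s) κ)
      _ = ∑ _s ∈ F, cMinus ω0 κ := Finset.sum_congr rfl (fun s _ => cMinus_orientSeq hor κ s)
      _ = p * cMinus ω0 κ := by rw [Finset.sum_const, hcard, smul_eq_mul]

lemma two_m_le_p {G : SimpleGraph V} {ω0 : V → V → Prop}
    (hor : IsOrientation G ω0) {s0 p m : ℕ}
    (hper : ∀ s, s0 ≤ s → orientSeq ω0 (s + p) = orientSeq ω0 s)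
    (hm : ∀ v : V, scnt ω0 v s0 (s0 + p) = m)
    {v u : V} (hadj : G.Adj v u) : 2 * m ≤ p := by
  classical
  have h2m : scnt ω0 v s0 (s0 + 2 * p) = 2 * m := by
    exact scnt_window_mul hper hm (le_refl s0) 2 (v := v)
  set S := (Finset.Ico s0 (s0 + 2 * p)).filter (fun s => IsSink (orientSeq ω0 s) v)
    with hS
  have hcardS : S.card = 2 * m := h2m
  have hnocons : ∀ s, ¬ (s ∈ S ∧ s + 1 ∈ S) := by
    rintro s ⟨h1, h2⟩
    rw [hS, Finset.mem_filter] at h1 h2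
    exact sink_not_sink_succ hor hadj h1.2 h2.2
  have hmaps : ∀ s ∈ S, (s - s0) / 2 ∈ Finset.range p := by
    intro s hs
    rw [hS, Finset.mem_filter, Finset.mem_Ico] at hs
    rw [Finset.mem_range]
    omega
  have hinj : Set.InjOn (fun s => (s - s0) / 2) S := by
    intro s hs t ht h
    have hs' := hs; have ht' := ht
    rw [Finset.mem_coe, hS, Finset.mem_filter, Finset.mem_Ico] at hs' ht'
    simp only at h
    by_contra hne
    rcases Nat.lt_or_ge s t with hlt | hge
    · have heq : t = s + 1 := by omega
      exact hnocons s ⟨hs, by rw [← heq]; exact ht⟩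
    · have heq : s = t + 1 := by omega
      exact hnocons t ⟨ht, by rw [← heq]; exact hs⟩
  have := Finset.card_le_card_of_injOn _ hmaps hinj
  rw [hcardS, Finset.card_range] at this
  exact this

lemma chain_exists {G : SimpleGraph V} {ω0 : V → V → Prop} [Finite V] [Nonempty V]
    (hor : IsOrientation G ω0) (hacy : DirAcyclic ω0)
    (hnbr : ∀ v : V, ∃ u, G.Adj v u) (T : ℕ) :
    ∃ f : ℕ → V,
      (∀ t, t < T → G.Adj (f (t+1)) (f t)) ∧
      (∀ t, t < T → orientSeq ω0 t (f (t+1)) (f t)) ∧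
      (∀ t, t ≤ T → IsSink (orientSeq ω0 t) (f t)) ∧
      (∀ t, t < T → ¬ IsSink (orientSeq ω0 t) (f (t+1))) := by
  classical
  -- g j is a sink at time T - j
  let g : ℕ → V := fun j => Nat.rec
    (Classical.choose (exists_sink (dirAcyclic_orientSeq hacy T)))
    (fun j gj => if h : ∃ u, orientSeq ω0 (T - (j+1)) gj u then Classical.choose h else gj)
    j
  have hg0 : IsSink (orientSeq ω0 (T - 0)) (g 0) :=
    Classical.choose_spec (exists_sink (dirAcyclic_orientSeq hacy T))
  have hstep : ∀ j, j < T → IsSink (orientSeq ω0 (T - j)) (g j) →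
      G.Adj (g j) (g (j+1)) ∧ orientSeq ω0 (T - (j+1)) (g j) (g (j+1)) ∧
      IsSink (orientSeq ω0 (T - (j+1))) (g (j+1)) ∧
      ¬ IsSink (orientSeq ω0 (T - (j+1))) (g j) := by
    intro j hj hsink
    set t := T - (j+1) with ht
    have hTj : T - j = t + 1 := by omega
    rw [hTj] at hsink
    -- g j is not a sink at time t
    have hns : ¬ IsSink (orientSeq ω0 t) (g j) := by
      intro hs
      obtain ⟨u, hu⟩ := hnbr (g j)
      exact sink_not_sink_succ hor hu hs hsink
    have hex : ∃ u, orientSeq ω0 t (g j) u := by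
      by_contra hne
      push_neg at hne
      exact hns hne
    have hgj1 : g (j+1) = Classical.choose hex := by
      show (if h : ∃ u, orientSeq ω0 (T - (j+1)) (g j) u then Classical.choose h else g j)
        = Classical.choose hex
      rw [dif_pos hex]
    have hu : orientSeq ω0 t (g j) (g (j+1)) := by
      rw [hgj1]; exact Classical.choose_spec hex
    have hadj : G.Adj (g j) (g (j+1)) := (isOrientation_orientSeq hor t _ _).1 hu
    have hnk : ¬ orientSeq ω0 t (g (j+1)) (g j) :=
      (orient_excl (isOrientation_orientSeq hor t) hadj).mp hu
    -- at time t+1, the edge points from g (j+1) to g j, so g (j+1) was a sink at t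
    have h2 : orientSeq ω0 (t+1) (g (j+1)) (g j) :=
      sink_in (isOrientation_orientSeq hor (t+1)) hadj.symm hsink
    have h3 : IsSink (orientSeq ω0 t) (g (j+1)) := by
      rw [orientSeq_succ] at h2
      exact (revStep_iff2 hu hnk).mp h2
    exact ⟨hadj, hu, h3, hns⟩
  have hmain : ∀ j, j ≤ T → IsSink (orientSeq ω0 (T - j)) (g j) := by
    intro j
    induction j with
    | zero => intro _; exact hg0
    | succ j ih =>
      intro hj
      have h1 := ih (by omega)
      have := hstep j (by omega) h1
      exact this.2.2.1
  have key : ∀ t, t < T →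
      G.Adj (g (T - (t+1))) (g (T - t)) ∧
      orientSeq ω0 t (g (T - (t+1))) (g (T - t)) ∧
      ¬ IsSink (orientSeq ω0 t) (g (T - (t+1))) := by
    intro t ht
    have hj1 : T - (t+1) < T := by omega
    have hsink : IsSink (orientSeq ω0 (T - (T - (t+1)))) (g (T - (t+1))) :=
      hmain (T - (t+1)) (by omega)
    have H := hstep (T - (t+1)) hj1 hsink
    rw [(by omega : T - (t+1) + 1 = T - t)] at H
    rw [(by omega : T - (T - t) = t)] at H
    exact ⟨H.1, H.2.1, H.2.2.2⟩
  refine ⟨fun t => g (T - t), ?_, ?_, ?_, ?_⟩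
  · intro t ht
    exact (key t ht).1
  · intro t ht
    exact (key t ht).2.1
  · intro t ht
    have := hmain (T - t) (by omega)
    rwa [(by omega : T - (T - t) = t)] at this
  · intro t ht
    exact (key t ht).2.2

noncomputable def cntP (Q : V → V → Prop) (f : ℕ → V) (a b : ℕ) : ℕ :=
  ((Finset.Ico a b).filter (fun t => Q (f t) (f (t+1)))).card

lemma cntP_add {Q : V → V → Prop} {f : ℕ → V} {a b c : ℕ} (hab : a ≤ b) (hbc : b ≤ c) :
    cntP Q f a b + cntP Q f b c = cntP Q f a c := by
  classical
  unfold cntP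
  rw [← Finset.card_union_of_disjoint, ← Finset.filter_union,
    Finset.Ico_union_Ico_eq_Ico hab hbc]
  exact Finset.disjoint_filter_filter (Finset.Ico_disjoint_Ico_consecutive a b c)

lemma cntP_single {Q : V → V → Prop} {f : ℕ → V} (a : ℕ) :
    cntP Q f a (a+1) = if Q (f a) (f (a+1)) then 1 else 0 := by
  classical
  unfold cntP
  rw [Nat.Ico_succ_singleton, Finset.filter_singleton]
  split <;> simp

lemma cntP_succ_right {Q : V → V → Prop} {f : ℕ → V} {a b : ℕ} (h : a ≤ b) :
    cntP Q f a (b+1) = cntP Q f a b + if Q (f b) (f (b+1)) then 1 else 0 := by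
  rw [← cntP_add h (Nat.le_succ b), cntP_single]

lemma cntP_congr {Q : V → V → Prop} {f g : ℕ → V} {a b : ℕ}
    (h : ∀ t, a ≤ t → t < b → f t = g t ∧ f (t+1) = g (t+1)) :
    cntP Q f a b = cntP Q g a b := by
  classical
  unfold cntP
  congr 1
  apply Finset.filter_congr
  intro t ht
  rw [Finset.mem_Ico] at ht
  rw [(h t ht.1 ht.2).1, (h t ht.1 ht.2).2]

lemma cntP_shift {Q : V → V → Prop} {f : ℕ → V} (dc a b : ℕ) :
    cntP Q (fun t => f (t + dc)) a b = cntP Q f (a + dc) (b + dc) := by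
  classical
  unfold cntP
  apply Finset.card_bij (fun t _ => t + dc)
  · intro t ht
    simp only [Finset.mem_filter, Finset.mem_Ico] at ht ⊢
    refine ⟨⟨by omega, by omega⟩, ?_⟩
    rw [(by omega : t + dc + 1 = t + 1 + dc)]
    exact ht.2
  · intro t _ t' _ h
    omega
  · intro t ht
    simp only [Finset.mem_filter, Finset.mem_Ico] at ht
    refine ⟨t - dc, ?_, by omega⟩
    simp only [Finset.mem_filter, Finset.mem_Ico]
    refine ⟨⟨by omega, by omega⟩, ?_⟩
    have h1 : t - dc + dc = t := by omega
    have h2 : t - dc + 1 + dc = t + 1 := by omega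
    rw [h1, h2]
    exact ht.2

/-- splicing out the segment `[c, d]` (where `f c = f d`) of a chain -/
lemma cntP_splice {Q : V → V → Prop} {f : ℕ → V} {a b c d : ℕ}
    (hac : a ≤ c) (hcd : c ≤ d) (hdb : d ≤ b) (hfc : f c = f d) :
    cntP Q (fun t => if t < c then f t else f (t + (d - c))) a (b - (d - c))
      = cntP Q f a c + cntP Q f d b := by
  classical
  set dc := d - c with hdc
  set h : ℕ → V := fun t => if t < c then f t else f (t + dc) with hh
  have h1 : cntP Q h a c + cntP Q h c (b - dc) = cntP Q h a (b - dc) :=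
    cntP_add hac (by omega)
  have h2 : cntP Q h a c = cntP Q f a c := by
    apply cntP_congr
    intro t h1t h2t
    constructor
    · simp [hh, h2t]
    · by_cases ht1 : t + 1 < c
      · simp [hh, ht1]
      · have : t + 1 = c := by omega
        simp only [hh, this, if_neg (lt_irrefl c)]
        rw [(by omega : c + dc = d), ← hfc]
  have h3 : cntP Q h c (b - dc) = cntP Q f d b := by
    have hcongr : cntP Q h c (b - dc) = cntP Q (fun t => f (t + dc)) c (b - dc) := by
      apply cntP_congr
      intro t h1t h2t
      constructor
      · simp [hh, not_lt.2 h1t]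
      · have hnc : ¬ (t + 1 < c) := by omega
        simp [hh, hnc]
    rw [hcongr, cntP_shift]
    rw [(by omega : c + dc = d), (by omega : b - dc + dc = b)]
  omega

lemma chain_step {G : SimpleGraph V} {ω0 : V → V → Prop} (hor : IsOrientation G ω0)
    {T : ℕ} {f : ℕ → V}
    (hadj : ∀ t, t < T → G.Adj (f (t+1)) (f t))
    (ho : ∀ t, t < T → orientSeq ω0 t (f (t+1)) (f t))
    (hnsk : ∀ t, t < T → ¬ IsSink (orientSeq ω0 t) (f (t+1)))
    {t : ℕ} (ht : t < T) :
    scnt ω0 (f (t+1)) 0 (t+1)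
      = scnt ω0 (f t) 0 t + if ω0 (f t) (f (t+1)) then 1 else 0 := by
  classical
  have hadjt := hadj t ht
  have hot := ho t ht
  have h1 : scnt ω0 (f (t+1)) 0 (t+1) = scnt ω0 (f (t+1)) 0 t := by
    rw [scnt_succ_right 0 t (Nat.zero_le t), if_neg (hnsk t ht)]
    ring
  by_cases hb : ω0 (f (t+1)) (f t)
  · have hnb : ¬ ω0 (f t) (f (t+1)) := by
      have := (orient_excl hor hadjt).mp hb
      exact this
    rw [h1, (alternation hor hb t).1 hot, if_neg hnb]
    ring
  · have hb' : ω0 (f t) (f (t+1)) := (orient_excl hor hadjt.symm).mpr hb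
    rw [h1, (alternation hor hb' t).2 hot, if_pos hb']

lemma chain_count {G : SimpleGraph V} {ω0 : V → V → Prop} (hor : IsOrientation G ω0)
    {T : ℕ} {f : ℕ → V}
    (hadj : ∀ t, t < T → G.Adj (f (t+1)) (f t))
    (ho : ∀ t, t < T → orientSeq ω0 t (f (t+1)) (f t))
    (hnsk : ∀ t, t < T → ¬ IsSink (orientSeq ω0 t) (f (t+1)))
    {c d : ℕ} (hcd : c ≤ d) (hdT : d ≤ T) :
    scnt ω0 (f d) 0 d = scnt ω0 (f c) 0 c + cntP ω0 f c d := by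
  classical
  induction d, hcd using Nat.le_induction with
  | base => simp [cntP]
  | succ d hcd ih =>
    have hdT' : d < T := by omega
    rw [chain_step hor hadj ho hnsk hdT', ih (by omega),
      cntP_succ_right hcd]
    ring

open SimpleGraph in
def buildWalk {G : SimpleGraph V} (f : ℕ → V) (a : ℕ) :
    (k : ℕ) → (∀ i, i < k → G.Adj (f (a+i)) (f (a+i+1))) → G.Walk (f a) (f (a+k))
  | 0, _ => Walk.nil
  | (k+1), h => (buildWalk f a k (fun i hi => h i (by omega))).concat (h k (by omega))

lemma buildWalk_length {G : SimpleGraph V} (f : ℕ → V) (a : ℕ) (k : ℕ)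
    (h : ∀ i, i < k → G.Adj (f (a+i)) (f (a+i+1))) :
    (buildWalk f a k h).length = k := by
  induction k with
  | zero => rfl
  | succ k ih =>
    show ((buildWalk f a k _).concat _).length = k + 1
    rw [SimpleGraph.Walk.length_concat, ih]

lemma buildWalk_support {G : SimpleGraph V} (f : ℕ → V) (a : ℕ) (k : ℕ)
    (h : ∀ i, i < k → G.Adj (f (a+i)) (f (a+i+1))) :
    (buildWalk f a k h).support = (List.range (k+1)).map (fun i => f (a+i)) := by
  induction k with
  | zero => rfl
  | succ k ih =>
    show ((buildWalk f a k _).concat _).support = _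
    rw [SimpleGraph.Walk.support_concat, ih, List.range_succ (n := k+1), List.map_append]
    simp [List.concat_eq_append]

lemma buildWalk_darts {G : SimpleGraph V} (f : ℕ → V) (a : ℕ) (k : ℕ)
    (h : ∀ i, i < k → G.Adj (f (a+i)) (f (a+i+1))) :
    (buildWalk f a k h).darts.map SimpleGraph.Dart.toProd
      = (List.range k).map (fun i => (f (a+i), f (a+i+1))) := by
  induction k with
  | zero => rfl
  | succ k ih =>
    show ((buildWalk f a k _).concat _).darts.map _ = _
    rw [SimpleGraph.Walk.darts_concat, List.range_succ, List.map_append, List.concat_eq_append,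
      List.map_append, ih]
    rfl

lemma countP_range_eq_cntP (Q : V → V → Prop) (f : ℕ → V) (a : ℕ) (k : ℕ) :
    (List.range k).countP (fun i => decide (Q (f (a+i)) (f (a+i+1))))
      = cntP Q f a (a+k) := by
  classical
  induction k with
  | zero => simp [cntP]
  | succ k ih =>
    rw [List.range_succ, List.countP_append, ih,
      (by omega : a + (k+1) = (a + k) + 1), cntP_succ_right (by omega : a ≤ a + k)]
    simp [List.countP_cons]

lemma cycle_of_segment {G : SimpleGraph V} (ω0 : V → V → Prop) (f : ℕ → V) (a k : ℕ)
    (hk : 3 ≤ k)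
    (hadjf : ∀ i, i < k → G.Adj (f (a+i)) (f (a+i+1)))
    (hclosed : f a = f (a+k))
    (hinj : ∀ c d, a ≤ c → c < d → d ≤ a + k → f c = f d → c = a ∧ d = a + k) :
    ∃ (w : V) (κ : G.Walk w w), κ.IsCycle ∧ κ.length = k ∧
      cPlus ω0 κ = cntP ω0 f a (a+k) ∧
      cMinus ω0 κ = cntP (fun x y => ω0 y x) f a (a+k) := by
  classical
  set W := buildWalk f a k hadjf with hW
  set κ : G.Walk (f a) (f a) := W.copy rfl hclosed.symm with hκ
  have hdarts : κ.darts = W.darts := SimpleGraph.Walk.darts_copy W rfl hclosed.symm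
  have hdartsmap : κ.darts.map SimpleGraph.Dart.toProd
      = (List.range k).map (fun i => (f (a+i), f (a+i+1))) := by
    rw [hdarts, hW, buildWalk_darts]
  have hlen : κ.length = k := by
    rw [hκ, SimpleGraph.Walk.length_copy, hW, buildWalk_length]
  have hsupp : κ.support = (List.range (k+1)).map (fun i => f (a+i)) := by
    rw [hκ, SimpleGraph.Walk.support_copy, hW, buildWalk_support]
  have hcplus : cPlus ω0 κ = cntP ω0 f a (a+k) := by
    unfold cPlus
    have h1 : κ.darts.countP (fun d => decide (ω0 d.toProd.1 d.toProd.2))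
        = (κ.darts.map SimpleGraph.Dart.toProd).countP (fun pr => decide (ω0 pr.1 pr.2)) := by
      rw [List.countP_map]; rfl
    rw [h1, hdartsmap, List.countP_map]
    exact countP_range_eq_cntP ω0 f a k
  have hcminus : cMinus ω0 κ = cntP (fun x y => ω0 y x) f a (a+k) := by
    unfold cMinus
    have h1 : κ.darts.countP (fun d => decide (ω0 d.toProd.2 d.toProd.1))
        = (κ.darts.map SimpleGraph.Dart.toProd).countP (fun pr => decide (ω0 pr.2 pr.1)) := by
      rw [List.countP_map]; rfl
    rw [h1, hdartsmap, List.countP_map]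
    exact countP_range_eq_cntP (fun x y => ω0 y x) f a k
  have hedges : κ.edges = (List.range k).map (fun i => s(f (a+i), f (a+i+1))) := by
    show κ.darts.map SimpleGraph.Dart.edge = _
    have : κ.darts.map SimpleGraph.Dart.edge
        = (κ.darts.map SimpleGraph.Dart.toProd).map (fun pr => s(pr.1, pr.2)) := by
      rw [List.map_map]; rfl
    rw [this, hdartsmap, List.map_map]
    rfl
  have hinj' : ∀ i j, i < k → j < k → i < j → f (a+i) ≠ f (a+j) ∨ (i = 0 ∧ j = k) := by
    intro i j hi hj hij
    by_cases h : f (a+i) = f (a+j)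
    · have := hinj (a+i) (a+j) (by omega) (by omega) (by omega) h
      right; omega
    · left; exact h
  have hedgesnodup : κ.edges.Nodup := by
    rw [hedges]
    apply List.Nodup.map_on _ List.nodup_range
    intro i hi j hj heq
    rw [List.mem_range] at hi hj
    rw [Sym2.eq_iff] at heq
    by_contra hne
    rcases heq with ⟨h1, h2⟩ | ⟨h1, h2⟩
    · rcases Nat.lt_or_ge i j with hlt | hge
      · have := hinj (a+i) (a+j) (by omega) (by omega) (by omega) h1
        omega
      · have hlt : j < i := by omega
        have := hinj (a+j) (a+i) (by omega) (by omega) (by omega) h1.symm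
        omega
    · rcases Nat.lt_trichotomy i j with hlt | heq' | hgt
      · rcases Nat.lt_or_ge (i+1) j with hlt2 | hge2
        · have := hinj (a+i+1) (a+j) (by omega) (by omega) (by omega) h2
          omega
        · have hij : j = i + 1 := by omega
          have h1' : f (a+i) = f (a+i+2) := by
            rw [h1, hij]; ring_nf
          have := hinj (a+i) (a+i+2) (by omega) (by omega) (by omega) h1'
          omega
      · subst heq'
        have := hinj (a+i) (a+i+1) (by omega) (by omega) (by omega) h1
        omega
      · rcases Nat.lt_or_ge (j+1) i with hlt2 | hge2
        · have := hinj (a+j+1) (a+i) (by omega) (by omega) (by omega) h1.symm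
          omega
        · have hij : i = j + 1 := by omega
          have h2' : f (a+j) = f (a+j+2) := by
            rw [← h2, hij]; ring_nf
          have := hinj (a+j) (a+j+2) (by omega) (by omega) (by omega) h2'
          omega
  have hne_nil : κ ≠ SimpleGraph.Walk.nil := by
    intro h
    rw [h] at hlen
    simp at hlen
    omega
  have htail : κ.support.tail.Nodup := by
    rw [hsupp, List.range_succ_eq_map, List.map_cons, List.tail_cons, List.map_map]
    apply List.Nodup.map_on _ List.nodup_range
    intro i hi j hj heq
    rw [List.mem_range] at hi hj
    simp only [Function.comp] at heq
    by_contra hne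
    rcases Nat.lt_or_ge i j with hlt | hge
    · have := hinj (a+i+1) (a+j+1) (by omega) (by omega) (by omega)
        (by rw [(by omega : a+i+1 = a + Nat.succ i), (by omega : a+j+1 = a + Nat.succ j), heq])
      omega
    · have := hinj (a+j+1) (a+i+1) (by omega) (by omega) (by omega)
        (by rw [(by omega : a+i+1 = a + Nat.succ i), (by omega : a+j+1 = a + Nat.succ j), heq])
      omega
  exact ⟨f a, κ, ⟨⟨⟨hedgesnodup⟩, hne_nil⟩, htail⟩, hlen, hcplus, hcminus⟩

lemma cPlus_add_cMinus {G : SimpleGraph V} {o : V → V → Prop} {w : V}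
    (hor : IsOrientation G o) (κ : G.Walk w w) :
    cPlus o κ + cMinus o κ = κ.length := by
  classical
  rw [← SimpleGraph.Walk.length_darts]
  unfold cPlus cMinus
  induction κ.darts with
  | nil => rfl
  | cons d l ih =>
    simp only [List.countP_cons, List.length_cons]
    by_cases h : o d.toProd.1 d.toProd.2
    · have hK : ¬ o d.toProd.2 d.toProd.1 := (orient_excl hor d.adj).mp h
      simp only [decide_eq_true_eq, if_pos h, if_neg hK]
      omega
    · have hK : o d.toProd.2 d.toProd.1 := (orient_excl hor d.adj.symm).mpr h
      simp only [decide_eq_true_eq, if_neg h, if_pos hK]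
      omega

lemma decompose {G : SimpleGraph V} {ω0 : V → V → Prop} (hor : IsOrientation G ω0)
    {p m : ℕ} (hq : 2*m ≤ p)
    (hcyc : ∃ (w : V) (κ : G.Walk w w), κ.IsCycle) :
    ∀ (n : ℕ) (f : ℕ → V) (a b : ℕ), b - a ≤ n → a < b →
      (∀ t, a ≤ t → t < b → G.Adj (f t) (f (t+1))) → f a = f b →
      min (cntP ω0 f a b) (cntP (fun x y => ω0 y x) f a b) * p ≤ m * (b - a) →
      ∃ (w : V) (κ : G.Walk w w), κ.IsCycle ∧
        min (cPlus ω0 κ) (cMinus ω0 κ) * p ≤ m * κ.length := by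
  classical
  intro n
  induction n with
  | zero => intro f a b hn hab; omega
  | succ n IH =>
    intro f a b hn hab hadjf hclosed hmin
    set Q : V → V → Prop := fun x y => ω0 y x with hQ
    by_cases hsplit : ∃ c d, a ≤ c ∧ c < d ∧ d ≤ b ∧ ¬(c = a ∧ d = b) ∧ f c = f d
    · obtain ⟨c, d, hac, hcd, hdb, hne, hfc⟩ := hsplit
      have hdclt : d - c < b - a := by omega
      set h : ℕ → V := fun t => if t < c then f t else f (t + (d - c)) with hh
      -- counts split
      have hXsplit : cntP ω0 f a b = cntP ω0 f c d + (cntP ω0 f a c + cntP ω0 f d b) := by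
        have e1 := cntP_add (Q := ω0) (f := f) hac (le_of_lt (lt_of_lt_of_le hcd hdb))
        have e2 := cntP_add (Q := ω0) (f := f) (le_of_lt hcd) hdb
        omega
      have hYsplit : cntP Q f a b = cntP Q f c d + (cntP Q f a c + cntP Q f d b) := by
        have e1 := cntP_add (Q := Q) (f := f) hac (le_of_lt (lt_of_lt_of_le hcd hdb))
        have e2 := cntP_add (Q := Q) (f := f) (le_of_lt hcd) hdb
        omega
      have hXh : cntP ω0 h a (b - (d - c)) = cntP ω0 f a c + cntP ω0 f d b :=
        cntP_splice hac (le_of_lt hcd) hdb hfc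
      have hYh : cntP Q h a (b - (d - c)) = cntP Q f a c + cntP Q f d b :=
        cntP_splice hac (le_of_lt hcd) hdb hfc
      set X1 := cntP ω0 f c d
      set Y1 := cntP Q f c d
      set X2 := cntP ω0 h a (b - (d - c))
      set Y2 := cntP Q h a (b - (d - c))
      have hminadd : min X1 Y1 + min X2 Y2
          ≤ min (cntP ω0 f a b) (cntP Q f a b) := by
        rw [hXsplit, hYsplit, hXh, hYh]
        exact le_min (add_le_add (min_le_left _ _) (min_le_left _ _))
          (add_le_add (min_le_right _ _) (min_le_right _ _))
      have hkey : min X1 Y1 * p ≤ m * (d - c) ∨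
          min X2 Y2 * p ≤ m * ((b - (d - c)) - a) := by
        by_contra hcon
        push_neg at hcon
        obtain ⟨h1, h2⟩ := hcon
        have e3 : min X1 Y1 * p + min X2 Y2 * p
            ≤ min (cntP ω0 f a b) (cntP Q f a b) * p := by
          rw [← add_mul]
          exact Nat.mul_le_mul_right p hminadd
        have e4 : m * (b - a) = m * (d - c) + m * ((b - (d - c)) - a) := by
          rw [← Nat.mul_add]
          congr 1
          omega
        linarith [hmin]
      rcases hkey with hk | hk
      · exact IH f c d (by omega) hcd
          (fun t ht1 ht2 => hadjf t (by omega) (by omega)) hfc hk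
      · -- outer spliced chain
        have hablt : a < b - (d - c) := by omega
        have hadjh : ∀ t, a ≤ t → t < b - (d - c) → G.Adj (h t) (h (t+1)) := by
          intro t ht1 ht2
          by_cases htc : t < c
          · have hht : h t = f t := by simp [hh, htc]
            by_cases htc1 : t + 1 < c
            · have : h (t+1) = f (t+1) := by simp [hh, htc1]
              rw [hht, this]
              exact hadjf t (by omega) (by omega)
            · have htc1' : t + 1 = c := by omega
              have : h (t+1) = f (t+1) := by
                simp only [hh, if_neg (by omega : ¬ (t + 1 < c))]
                rw [htc1', (by omega : c + (d - c) = d), ← hfc, ← htc1']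
              rw [hht, this]
              exact hadjf t (by omega) (by omega)
          · have hht : h t = f (t + (d - c)) := by simp [hh, htc]
            have hht1 : h (t+1) = f (t + (d - c) + 1) := by
              simp only [hh, if_neg (by omega : ¬ (t + 1 < c))]
              rw [(by omega : t + 1 + (d - c) = t + (d - c) + 1)]
            rw [hht, hht1]
            exact hadjf (t + (d - c)) (by omega) (by omega)
        have hclosedh : h a = h (b - (d - c)) := by
          have h2 : h (b - (d - c)) = f b := by
            simp only [hh, if_neg (by omega : ¬ (b - (d - c) < c))]
            rw [(by omega : b - (d - c) + (d - c) = b)]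
          by_cases hca : a < c
          · have h1 : h a = f a := by simp [hh, hca]
            rw [h1, h2, hclosed]
          · have hca' : a = c := by omega
            have h1 : h a = f a := by
              simp only [hh, if_neg (by omega : ¬ (a < c))]
              rw [hca', (by omega : c + (d - c) = d), ← hfc]
            rw [h1, h2, hclosed]
        exact IH h a (b - (d - c)) (by omega) hablt hadjh hclosedh hk
    · push_neg at hsplit
      rcases Nat.lt_or_ge (b - a) 3 with hk3 | hk3
      · rcases (by omega : b - a = 1 ∨ b - a = 2) with hk | hk
        · exfalso
          have hadj1 := hadjf a le_rfl (by omega)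
          have : f (a+1) = f a := by
            rw [(by omega : a + 1 = b), ← hclosed]
          exact hadj1.ne this.symm
        · -- backtrack: p = 2m, use the given cycle
          have hb2 : b = a + 2 := by omega
          subst hb2
          have hadj1 := hadjf a le_rfl (by omega)
          have hf2 : f (a + 1 + 1) = f a := by
            rw [(by omega : a + 1 + 1 = a + 2), ← hclosed]
          have hX : cntP ω0 f a (a+2) = 1 := by
            rw [(show a + 2 = a + 1 + 1 by omega)]
            have e := cntP_add (Q := ω0) (f := f) (by omega : a ≤ a + 1)
              (by omega : a + 1 ≤ a + 1 + 1)
            rw [← e, cntP_single, cntP_single, hf2]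
            by_cases hw : ω0 (f a) (f (a+1))
            · have hnw : ¬ ω0 (f (a+1)) (f a) := (orient_excl hor hadj1).mp hw
              rw [if_pos hw, if_neg hnw]
            · have hnw : ω0 (f (a+1)) (f a) := (orient_excl hor hadj1.symm).mpr hw
              rw [if_neg hw, if_pos hnw]
          have hY : cntP Q f a (a+2) = 1 := by
            rw [(show a + 2 = a + 1 + 1 by omega)]
            have e := cntP_add (Q := Q) (f := f) (by omega : a ≤ a + 1)
              (by omega : a + 1 ≤ a + 1 + 1)
            rw [← e, cntP_single, cntP_single, hf2]
            by_cases hw : ω0 (f a) (f (a+1))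
            · have hnw : ¬ ω0 (f (a+1)) (f a) := (orient_excl hor hadj1).mp hw
              rw [if_neg (show ¬ Q (f a) (f (a+1)) from hnw), if_pos (show Q (f (a+1)) (f a) from hw)]
            · have hnw : ω0 (f (a+1)) (f a) := (orient_excl hor hadj1.symm).mpr hw
              rw [if_pos (show Q (f a) (f (a+1)) from hnw), if_neg (show ¬ Q (f (a+1)) (f a) from hw)]
          rw [hX, hY, (by omega : a + 2 - a = 2)] at hmin
          simp only [min_self, one_mul] at hmin
          -- so p ≤ 2 * m, hence p = 2 * m
          obtain ⟨w0, κ0, hκ0⟩ := hcyc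
          refine ⟨w0, κ0, hκ0, ?_⟩
          have hsum := cPlus_add_cMinus hor κ0
          have h2min : 2 * min (cPlus ω0 κ0) (cMinus ω0 κ0) ≤ κ0.length := by
            have := min_le_left (cPlus ω0 κ0) (cMinus ω0 κ0)
            have := min_le_right (cPlus ω0 κ0) (cMinus ω0 κ0)
            omega
          calc min (cPlus ω0 κ0) (cMinus ω0 κ0) * p
              = m * (2 * min (cPlus ω0 κ0) (cMinus ω0 κ0)) := by
                rw [(by omega : p = 2 * m)]; ring
            _ ≤ m * κ0.length := Nat.mul_le_mul_left m h2min
      · -- injective segment: a genuine cycle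
        set k := b - a with hk
        have hb : a + k = b := by omega
        have hadj' : ∀ i, i < k → G.Adj (f (a+i)) (f (a+i+1)) := by
          intro i hi
          exact hadjf (a+i) (by omega) (by omega)
        have hclosed' : f a = f (a + k) := by rw [hb]; exact hclosed
        have hinj' : ∀ c d, a ≤ c → c < d → d ≤ a + k → f c = f d → c = a ∧ d = a + k := by
          intro c d h1 h2 h3 h4
          by_contra hcon
          exact hsplit c d h1 h2 (by omega)
            (fun hca hdb' => hcon ⟨hca, by omega⟩) h4
        obtain ⟨w, κ, hκ, hlen, hcp, hcm⟩ :=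
          cycle_of_segment ω0 f a k hk3 hadj' hclosed' hinj'
        refine ⟨w, κ, hκ, ?_⟩
        rw [hcp, hcm, hb, hlen]
        exact hmin

lemma cntP_total {G : SimpleGraph V} {ω0 : V → V → Prop} (hor : IsOrientation G ω0)
    {f : ℕ → V} {a b : ℕ} (hab : a ≤ b)
    (hadjf : ∀ t, a ≤ t → t < b → G.Adj (f t) (f (t+1))) :
    cntP ω0 f a b + cntP (fun x y => ω0 y x) f a b = b - a := by
  classical
  induction b, hab using Nat.le_induction with
  | base => simp [cntP]
  | succ b hab ih =>
    have hadjb := hadjf b (by omega) (by omega)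
    have e := ih (fun t h1 h2 => hadjf t h1 (by omega))
    rw [cntP_succ_right hab, cntP_succ_right hab]
    by_cases hw : ω0 (f b) (f (b+1))
    · have hnw : ¬ ω0 (f (b+1)) (f b) := (orient_excl hor hadjb).mp hw
      rw [if_pos hw, if_neg (show ¬ (fun x y => ω0 y x) (f b) (f (b+1)) from hnw)]
      omega
    · have hnw : ω0 (f (b+1)) (f b) := (orient_excl hor hadjb.symm).mpr hw
      rw [if_neg hw, if_pos (show (fun x y => ω0 y x) (f b) (f (b+1)) from hnw)]
      omega

/-- For an edge-reversal computation on a finite connected simple graph containing at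
least one cycle, the concurrency `m/p` equals the minimum over all simple cycles `κ`
of `min(c⁺(κ,ω0), c⁻(κ,ω0)) / |κ|`. -/
theorem edge_reversal_concurrency_formula [Fintype V]
    (G : SimpleGraph V) (hG : G.Connected)
    (hcyc : ∃ (w : V) (κ : G.Walk w w), κ.IsCycle)
    (ω0 : V → V → Prop) (hor : IsOrientation G ω0) (hacy : DirAcyclic ω0)
    (s0 p m : ℕ) (hp : 0 < p)
    (hper : ∀ s, s0 ≤ s → orientSeq ω0 (s + p) = orientSeq ω0 s)
    (hm : ∀ v : V, {s ∈ Set.Ico s0 (s0 + p) | IsSink (orientSeq ω0 s) v}.ncard = m) :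
    (∀ (w : V) (κ : G.Walk w w), κ.IsCycle →
        (m : ℚ) / (p : ℚ) ≤ (min (cPlus ω0 κ) (cMinus ω0 κ) : ℚ) / (κ.length : ℚ)) ∧
      ∃ (w : V) (κ : G.Walk w w), κ.IsCycle ∧
        (m : ℚ) / (p : ℚ) = (min (cPlus ω0 κ) (cMinus ω0 κ) : ℚ) / (κ.length : ℚ) := by
  classical
  obtain ⟨w0, κ0, hκ0⟩ := hcyc
  haveI : Nonempty V := ⟨w0⟩
  -- convert hm to scnt form
  have hm' : ∀ v : V, scnt ω0 v s0 (s0 + p) = m := by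
    intro v
    have hset : {s ∈ Set.Ico s0 (s0 + p) | IsSink (orientSeq ω0 s) v}
        = ↑((Finset.Ico s0 (s0 + p)).filter (fun s => IsSink (orientSeq ω0 s) v)) := by
      ext s
      simp [Set.mem_Ico]
    have := hm v
    rw [hset, Set.ncard_coe_finset] at this
    exact this
  -- every vertex has a neighbour
  have hxy : ∃ x y : V, x ≠ y := by
    have h3 : 3 ≤ κ0.length := hκ0.three_le_length
    have hadj01 := κ0.adj_getVert_succ (i := 0) (by omega)
    rw [SimpleGraph.Walk.getVert_zero] at hadj01
    exact ⟨w0, κ0.getVert 1, hadj01.ne⟩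
  have hnbr : ∀ v : V, ∃ u, G.Adj v u := by
    intro v
    obtain ⟨x, y, hxyne⟩ := hxy
    have hw : ∃ w : V, w ≠ v := by
      by_cases hvx : v = x
      · exact ⟨y, by rw [hvx]; exact fun h => hxyne h.symm⟩
      · exact ⟨x, fun h => hvx h.symm⟩
    obtain ⟨w, hwv⟩ := hw
    obtain ⟨W⟩ := hG.preconnected v w
    cases W with
    | nil => exact absurd rfl hwv.symm
    | cons h q => exact ⟨_, h⟩
  -- 2m ≤ p
  obtain ⟨u0, hu0⟩ := hnbr w0
  have h2m : 2 * m ≤ p := two_m_le_p hor hper hm' hu0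
  -- Part 1
  have part1 : ∀ (w : V) (κ : G.Walk w w), κ.IsCycle →
      (m : ℚ) / (p : ℚ) ≤ (min (cPlus ω0 κ) (cMinus ω0 κ) : ℚ) / (κ.length : ℚ) := by
    intro w κ hκ
    have h3 : 3 ≤ κ.length := hκ.three_le_length
    have hb := walk_bound hor hm' κ
    have hminb : κ.length * m ≤ p * min (cPlus ω0 κ) (cMinus ω0 κ) := by
      rcases le_total (cPlus ω0 κ) (cMinus ω0 κ) with hle | hle
      · rw [min_eq_left hle]; exact hb.1
      · rw [min_eq_right hle]; exact hb.2
    rw [div_le_div_iff₀ (by exact_mod_cast hp) (by exact_mod_cast (by omega : 0 < κ.length))]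
    have : ((κ.length * m : ℕ) : ℚ) ≤ ((p * min (cPlus ω0 κ) (cMinus ω0 κ) : ℕ) : ℚ) :=
      Nat.cast_le.mpr hminb
    push_cast at this
    linarith
  refine ⟨part1, ?_⟩
  -- Part 2 : build the chain
  set T := s0 + (Fintype.card V) * p with hT
  obtain ⟨f, hadjc, hoc, hsinkc, hnskc⟩ := chain_exists hor hacy hnbr T
  -- pigeonhole on the times s0 + j * p
  obtain ⟨j1, hj1, j2, hj2, hjne, hjeq⟩ :=
    Finset.exists_ne_map_eq_of_card_lt_of_maps_to
      (s := Finset.range (Fintype.card V + 1)) (t := Finset.univ)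
      (by simp) (fun j _ => Finset.mem_univ (f (s0 + j * p)))
  rw [Finset.mem_range] at hj1 hj2
  -- order them
  wlog hj12 : j1 < j2 generalizing j1 j2
  · exact this j2 hj2 j1 hj1 hjne.symm hjeq.symm (by omega)
  set k := j2 - j1 with hk
  set a := s0 + j1 * p with ha
  set b := s0 + j2 * p with hb
  have hkpos : 0 < k := by omega
  have hbak : b = a + k * p := by
    have h2 : j2 * p = j1 * p + (j2 - j1) * p := by
      rw [← add_mul, Nat.add_sub_cancel' (le_of_lt hj12)]
    rw [hb, ha, hk, h2, add_assoc]
  have hba : b - a = k * p := by rw [hbak, Nat.add_sub_cancel_left]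
  have haT : a ≤ T := by
    rw [ha, hT]
    have : j1 * p ≤ Fintype.card V * p := Nat.mul_le_mul_right p (by omega)
    omega
  have hbT : b ≤ T := by
    rw [hb, hT]
    have : j2 * p ≤ Fintype.card V * p := Nat.mul_le_mul_right p (by omega)
    omega
  have hab : a < b := by
    rw [hbak]
    have : 0 < k * p := Nat.mul_pos hkpos hp
    omega
  have hfab : f a = f b := hjeq
  -- count of forward edges along the chain segment
  have hX : cntP ω0 f a b = k * m := by
    have hcc := chain_count hor hadjc hoc hnskc (le_of_lt hab) hbT
    rw [← hfab] at hcc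
    have hsa : scnt ω0 (f a) 0 b = scnt ω0 (f a) 0 a + scnt ω0 (f a) a b :=
      (scnt_add (Nat.zero_le a) (le_of_lt hab)).symm
    have hwin : scnt ω0 (f a) a b = k * m := by
      rw [hbak]
      exact scnt_window_mul hper hm' (by rw [ha]; omega) k
    omega
  have hY : cntP (fun x y => ω0 y x) f a b = k * p - k * m := by
    have := cntP_total hor (le_of_lt hab)
      (fun t h1 h2 => (hadjc t (by omega)).symm)
    omega
  have hbound : min (cntP ω0 f a b) (cntP (fun x y => ω0 y x) f a b) * p
      ≤ m * (b - a) := by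
    have hmin : min (cntP ω0 f a b) (cntP (fun x y => ω0 y x) f a b) = k * m := by
      rw [hX, hY]
      have h1 : k * m ≤ k * p - k * m := by
        have : k * (2 * m) ≤ k * p := Nat.mul_le_mul_left k h2m
        have h2 : k * m + k * m = k * (2 * m) := by ring
        omega
      exact min_eq_left h1
    rw [hmin, hba]
    exact le_of_eq (by ring)
  obtain ⟨w, κ, hκ, hbnd⟩ := decompose hor h2m ⟨w0, κ0, hκ0⟩ (b - a) f a b le_rfl hab
    (fun t h1 h2 => (hadjc t (by omega)).symm) hfab hbound
  refine ⟨w, κ, hκ, ?_⟩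
  -- equality from the two inequalities
  have h3 : 3 ≤ κ.length := hκ.three_le_length
  have hb2 := walk_bound hor hm' κ
  have hge : κ.length * m ≤ p * min (cPlus ω0 κ) (cMinus ω0 κ) := by
    rcases le_total (cPlus ω0 κ) (cMinus ω0 κ) with hle | hle
    · rw [min_eq_left hle]; exact hb2.1
    · rw [min_eq_right hle]; exact hb2.2
  have heq : κ.length * m = p * min (cPlus ω0 κ) (cMinus ω0 κ) := by
    refine Nat.le_antisymm hge ?_
    calc p * min (cPlus ω0 κ) (cMinus ω0 κ)
        = min (cPlus ω0 κ) (cMinus ω0 κ) * p := mul_comm _ _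
      _ ≤ m * κ.length := hbnd
      _ = κ.length * m := mul_comm _ _
  rw [div_eq_div_iff (show (p:ℚ) ≠ 0 from Nat.cast_ne_zero.mpr (by omega)) (show (κ.length:ℚ) ≠ 0 from Nat.cast_ne_zero.mpr (by omega))]
  have : ((κ.length * m : ℕ) : ℚ) = ((p * min (cPlus ω0 κ) (cMinus ω0 κ) : ℕ) : ℚ) :=
    congrArg _ heq
  push_cast at this
  linarith
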